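/- Let G be a valued group and let f, g ∈ G with f ≠ 1 and g ≠ 1. Then the following four statements are equivalent: f*g⁻¹ ≺ f; f*g⁻¹ ≺ g; g⁻¹*f ≺ f; g⁻¹*f ≺ g. -/
import Mathlib


variable {G : Type*} [Group G]

/-- `f ≺ g` : strict part of the dominance relation. -/
def vlt (le : G → G → Prop) (f g : G) : Prop := le f g ∧ ¬ le g f

/-- `f ≍ g` : equivalence induced by the dominance relation. -/
def veq (le : G → G → Prop) (f g : G) : Prop := le f g ∧ le g f

/-- A dominance relation on a group `G`, making it a valued group:
a reflexive, transitive, total relation satisfying D1-D4. -/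
structure IsValuation (le : G → G → Prop) : Prop where
  refl : ∀ f : G, le f f
  trans : ∀ f g h : G, le f g → le g h → le f h
  total : ∀ f g : G, le f g ∨ le g f
  d1 : ∀ f : G, f ≠ 1 → vlt le 1 f
  d2 : ∀ f g : G, le (f * g) f ∨ le (f * g) g
  d3 : ∀ f g h : G, le f g → le (h * f * h⁻¹) (h * g * h⁻¹)
  d4 : ∀ f : G, veq le f f⁻¹

/-- Proposition 2.23: for nonidentity `f, g`, the four conditions
`f*g⁻¹ ≺ f`, `f*g⁻¹ ≺ g`, `g⁻¹*f ≺ f`, `g⁻¹*f ≺ g` are equivalent. -/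
theorem sim_tfae (le : G → G → Prop) (hv : IsValuation le)
    (f g : G) (hf : f ≠ 1) (hg : g ≠ 1) :
    [vlt le (f * g⁻¹) f, vlt le (f * g⁻¹) g,
     vlt le (g⁻¹ * f) f, vlt le (g⁻¹ * f) g].TFAE := by
  obtain ⟨refl, tr, tot, d1, d2, d3, d4⟩ := hv
  -- conjugation is an order isomorphism
  have conj : ∀ x y h : G, le x y ↔ le (h * x * h⁻¹) (h * y * h⁻¹) := by
    intro x y h
    constructor
    · exact d3 x y h
    · intro H
      have := d3 _ _ h⁻¹ H
      simpa [mul_assoc] using this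
  have inv_le : ∀ x : G, le x⁻¹ x := fun x => (d4 x).2
  have le_inv : ∀ x : G, le x x⁻¹ := fun x => (d4 x).1
  -- each condition implies f ≍ g
  have heq1 : vlt le (f * g⁻¹) f → veq le f g := by
    rintro ⟨h1, h2⟩
    constructor
    · have := d2 (f * g⁻¹) g
      simp only [inv_mul_cancel_right] at this
      rcases this with h | h
      · exact absurd h h2
      · exact h
    · have := d2 f⁻¹ (f * g⁻¹)
      simp only [inv_mul_cancel_left] at this
      rcases this with h | h
      · exact tr _ _ _ (le_inv g) (tr _ _ _ h (inv_le f))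
      · exact tr _ _ _ (le_inv g) (tr _ _ _ h h1)
  have heq2 : vlt le (f * g⁻¹) g → veq le f g := by
    rintro ⟨h1, h2⟩
    constructor
    · have := d2 (f * g⁻¹) g
      simp only [inv_mul_cancel_right] at this
      rcases this with h | h
      · exact tr _ _ _ h h1
      · exact h
    · have := d2 f⁻¹ (f * g⁻¹)
      simp only [inv_mul_cancel_left] at this
      rcases this with h | h
      · exact tr _ _ _ (le_inv g) (tr _ _ _ h (inv_le f))
      · exact absurd (tr _ _ _ (le_inv g) h) h2
  have heq3 : vlt le (g⁻¹ * f) f → veq le f g := by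
    rintro ⟨h1, h2⟩
    constructor
    · have := d2 g (g⁻¹ * f)
      simp only [mul_inv_cancel_left] at this
      rcases this with h | h
      · exact h
      · exact absurd h h2
    · have := d2 (g⁻¹ * f) f⁻¹
      simp only [mul_inv_cancel_right] at this
      rcases this with h | h
      · exact tr _ _ _ (le_inv g) (tr _ _ _ h h1)
      · exact tr _ _ _ (le_inv g) (tr _ _ _ h (inv_le f))
  have heq4 : vlt le (g⁻¹ * f) g → veq le f g := by
    rintro ⟨h1, h2⟩
    constructor
    · have := d2 g (g⁻¹ * f)
      simp only [mul_inv_cancel_left] at this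
      rcases this with h | h
      · exact h
      · exact tr _ _ _ h h1
    · have := d2 (g⁻¹ * f) f⁻¹
      simp only [mul_inv_cancel_right] at this
      rcases this with h | h
      · exact absurd (tr _ _ _ (le_inv g) h) h2
      · exact tr _ _ _ (le_inv g) (tr _ _ _ h (inv_le f))
  -- (2) ↔ (4) by conjugation by g
  have h24 : vlt le (f * g⁻¹) g ↔ vlt le (g⁻¹ * f) g := by
    unfold vlt
    rw [conj (g⁻¹ * f) g g, conj g (g⁻¹ * f) g]
    have e1 : g * (g⁻¹ * f) * g⁻¹ = f * g⁻¹ := by group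
    have e2 : g * g * g⁻¹ = g := by group
    rw [e1, e2]
  -- under f ≍ g, swap the right-hand side
  have swap : veq le f g → ∀ x : G, (vlt le x f ↔ vlt le x g) := by
    rintro ⟨hfg, hgf⟩ x
    constructor
    · rintro ⟨h1, h2⟩
      exact ⟨tr _ _ _ h1 hfg, fun h => h2 (tr _ _ _ hfg h)⟩
    · rintro ⟨h1, h2⟩
      exact ⟨tr _ _ _ h1 hgf, fun h => h2 (tr _ _ _ hgf h)⟩
  have h12 : vlt le (f * g⁻¹) f ↔ vlt le (f * g⁻¹) g := by
    constructor
    · intro h; exact (swap (heq1 h) _).1 h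
    · intro h; exact (swap (heq2 h) _).2 h
  have h34 : vlt le (g⁻¹ * f) f ↔ vlt le (g⁻¹ * f) g := by
    constructor
    · intro h; exact (swap (heq3 h) _).1 h
    · intro h; exact (swap (heq4 h) _).2 h
  tfae_have 1 ↔ 2 := h12
  tfae_have 2 ↔ 4 := h24
  tfae_have 3 ↔ 4 := h34
  tfae_finish
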